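/- Let R be a ring, G a group, f : G → Z(G) a group homomorphism into the center of G, and X a right R[G]-module. Define x ⟨under⟩*^g y := x·g + y·(f(g) − g) and x ⟨over⟩*^g y := x·f(g). Then (X, {⟨under⟩*^g}, {⟨over⟩*^g}) is a G-family of biquandles. -/

import Mathlib

/-- A `G`-family of biquandles: a nonempty set `X` with families of operations
`u g` (⟨under⟩*^g) and `o g` (⟨over⟩*^g) indexed by a group `G`. -/
structure GFamilyBiquandle (G : Type*) [Group G] (X : Type*) where
  nonempty : Nonempty X
  u : G → X → X → X
  o : G → X → X → X
  diag : ∀ (g : G) (x : X), u g x x = o g x x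
  uComp : ∀ (g h : G) (x y : X), u (g * h) x y = u h (u g x y) (u g y y)
  uOne : ∀ x y : X, u 1 x y = x
  oComp : ∀ (g h : G) (x y : X), o (g * h) x y = o h (o g x y) (o g y y)
  oOne : ∀ x y : X, o 1 x y = x
  ex1 : ∀ (g h : G) (x y z : X),
    u h (u g x y) (o g z y) = u (h⁻¹ * g * h) (u h x z) (u h y z)
  ex2 : ∀ (g h : G) (x y z : X),
    u h (o g x y) (o g z y) = o (h⁻¹ * g * h) (u h x z) (u h y z)
  ex3 : ∀ (g h : G) (x y z : X),
    o h (o g x y) (o g z y) = o (h⁻¹ * g * h) (o h x z) (u h y z)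

def alexAux {G A X : Type*} [Group G] [Ring A] [AddCommGroup X] [Module A X]
    [Nonempty X]
    (α β : G → A)
    (hαmul : ∀ g h : G, α (g * h) = α h * α g) (hα1 : α 1 = 1)
    (hβmul : ∀ g h : G, β (g * h) = β h * β g) (hβ1 : β 1 = 1)
    (hβconj : ∀ g h : G, β (h⁻¹ * g * h) = β g)
    (hαβ : ∀ g h : G, β g * α h = α h * β g)
    (hββ : ∀ g h : G, β g * β h = β h * β g)
    (hk : ∀ g h : G, α (h⁻¹ * g * h) * α h = α h * α g) :
    GFamilyBiquandle G X where
  nonempty := ‹_›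
  u g x y := α g • x + (β g - α g) • y
  o g x y := β g • x
  diag g x := by rw [sub_smul]; abel
  uComp g h x y := by
    simp only [smul_add, smul_sub, smul_smul, sub_smul, add_smul, sub_mul, mul_sub,
      mul_add, add_mul, hαmul, hβmul]
    abel
  uOne x y := by simp [hα1, hβ1]
  oComp g h x y := by simp only [smul_smul, hβmul]
  oOne x y := by simp [hβ1]
  ex1 g h x y z := by
    simp only [hβconj, smul_add, smul_sub, smul_smul, sub_smul, add_smul, sub_mul,
      mul_sub, mul_add, add_mul, hk, hαβ, hββ]
    abel
  ex2 g h x y z := by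
    simp only [hβconj, smul_add, smul_sub, smul_smul, sub_smul, add_smul, sub_mul,
      mul_sub, mul_add, add_mul, hk, hαβ, hββ]
  ex3 g h x y z := by
    simp only [hβconj, smul_smul, hββ]

open MulOpposite in
/-- For a ring `R`, a group `G`, a homomorphism `f : G → Z(G)` into the center,
and a right `R[G]`-module `X`, the operations `x ⟨under⟩*^g y := x·g + y·(f(g) − g)`
and `x ⟨over⟩*^g y := x·f(g)` make `X` a `G`-family of biquandles
(the `G`-family of Alexander biquandles). -/
theorem stmt_14 (R G X : Type*) [Ring R] [Group G] [AddCommGroup X]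
    [Module (MonoidAlgebra R G)ᵐᵒᵖ X]
    (f : G →* G) (hf : ∀ g, f g ∈ Subgroup.center G) :
    ∃ F : GFamilyBiquandle G X,
      (F.u = fun (g : G) (x y : X) =>
        op (MonoidAlgebra.of R G g) • x +
          op (MonoidAlgebra.of R G (f g) - MonoidAlgebra.of R G g) • y) ∧
      (F.o = fun (g : G) (x y : X) => op (MonoidAlgebra.of R G (f g)) • x) := by
  have : Nonempty X := ⟨0⟩
  set α : G → (MonoidAlgebra R G)ᵐᵒᵖ := fun g => op (MonoidAlgebra.of R G g) with hα
  set β : G → (MonoidAlgebra R G)ᵐᵒᵖ := fun g => op (MonoidAlgebra.of R G (f g)) with hβ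
  have hαmul : ∀ g h : G, α (g * h) = α h * α g := by
    intro g h; simp only [hα]; rw [map_mul, op_mul]
  have hα1 : α 1 = 1 := by simp only [hα]; rw [map_one, op_one]
  have hβmul : ∀ g h : G, β (g * h) = β h * β g := by
    intro g h; simp only [hβ]; rw [map_mul, map_mul, op_mul]
  have hβ1 : β 1 = 1 := by simp only [hβ]; rw [map_one, map_one, op_one]
  have hβconj : ∀ g h : G, β (h⁻¹ * g * h) = β g := by
    intro g h
    have hc : f g * f h = f h * f g := ((Subgroup.mem_center_iff.mp (hf g)) (f h)).symm
    have : f (h⁻¹ * g * h) = f g := by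
      rw [map_mul, map_mul, map_inv, mul_assoc, hc, ← mul_assoc, inv_mul_cancel, one_mul]
    simp only [hβ, this]
  have hαβ : ∀ g h : G, β g * α h = α h * β g := by
    intro g h
    simp only [hα, hβ, ← op_mul, ← map_mul]
    exact congrArg _ (congrArg _ ((Subgroup.mem_center_iff.mp (hf g)) h))
  have hββ : ∀ g h : G, β g * β h = β h * β g := by
    intro g h; exact hαβ g (f h)
  have hk : ∀ g h : G, α (h⁻¹ * g * h) * α h = α h * α g := by
    intro g h
    rw [← hαmul, ← hαmul]
    congr 1
    group
  refine ⟨alexAux α β hαmul hα1 hβmul hβ1 hβconj hαβ hββ hk, ?_, rfl⟩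
  funext g x y
  show α g • x + (β g - α g) • y = _
  simp [hα, hβ, op_sub]
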